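/- arXiv:2506.22825 — 2 statements merged into one kernel-verified Lean document; each statement's English description precedes it below -/
import Mathlib

section
/- Every symmetral bimould A∈MU(R) is gantar-invariant, i.e. gantar(A)=A, and every alternal bimould A∈LU(R) is mantar-invariant, i.e. mantar(A)=A. -/
namespace Flexion

variable {R : Type*} [CommRing R] [Algebra ℚ R]
variable {G H : Type*} [AddCommGroup G] [AddCommGroup H]

/-- A bimould over `R` with letters in `G × H`, given by its values on all
finite sequences of letters. -/
abbrev Mould (R G H : Type*) := List (G × H) → R

/-- The unit bimould `1`: value `1` on the empty sequence, `0` elsewhere. -/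
def muOne : Mould R G H := fun w => match w with | [] => 1 | _ => 0

/-- The uninflected product `mmu`. -/
def mmu (A B : Mould R G H) : Mould R G H := fun w =>
  ∑ i ∈ Finset.range (w.length + 1), A (w.take i) * B (w.drop i)

/-- `n`-fold `mmu`-power. -/
def mmuPow (A : Mould R G H) : ℕ → Mould R G H
  | 0 => muOne
  | n + 1 => mmu A (mmuPow A n)

/-- The operator `neg`. -/
def neg (A : Mould R G H) : Mould R G H := fun w => A (w.map fun p => (-p.1, -p.2))

/-- The operator `anti`. -/
def anti (A : Mould R G H) : Mould R G H := fun w => A w.reverse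

/-- The operator `pari`. -/
def pari (A : Mould R G H) : Mould R G H := fun w => (-1 : R) ^ w.length * A w

/-- The operator `mantar`; note `(-1)^(r-1) = -(-1)^r`. -/
def mantar (A : Mould R G H) : Mould R G H := fun w => -((-1 : R) ^ w.length * A w.reverse)

/-- The `v`-component of the last letter (0 for the empty sequence). -/
def lastV : List (G × H) → H
  | [] => 0
  | [p] => p.2
  | _ :: p :: ps => lastV (p :: ps)

/-- The `v`-component of the first letter (0 for the empty sequence). -/
def headV : List (G × H) → H
  | [] => 0
  | p :: _ => p.2

/-- Sum of the `u`-components. -/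
def uSum (w : List (G × H)) : G := (w.map Prod.fst).sum

/-- The operator `push`. -/
def push (A : Mould R G H) : Mould R G H := fun w =>
  match w with
  | [] => A []
  | x :: xs =>
      A ((-uSum (x :: xs), -lastV (x :: xs)) ::
          ((x :: xs).dropLast.map fun p => (p.1, p.2 - lastV (x :: xs))))

/-- The operator `swap`. -/
def swap (A : Mould R G H) : Mould R H G := fun w =>
  A (List.ofFn fun j : Fin w.length =>
      (headV (w.drop (w.length - 1 - (j : ℕ))) - headV (w.drop (w.length - (j : ℕ))),
       uSum (w.take (w.length - (j : ℕ)))))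

/-- Auxiliary fuelled definition of the `mmu`-inverse. -/
def invmuAux (A : Mould R G H) : ℕ → Mould R G H
  | 0 => fun w => match w with | [] => 1 | _ => 0
  | n + 1 => fun w =>
      match w with
      | [] => 1
      | x :: xs =>
          -∑ i ∈ Finset.range (xs.length + 1),
            A ((x :: xs).take (i + 1)) * invmuAux A n (xs.drop i)

/-- The `mmu`-inverse of a bimould of `MU(R)` (value `1` at the empty sequence). -/
def invmu (A : Mould R G H) : Mould R G H := fun w => invmuAux A w.length w

/-- `gantar := invmu ∘ pari ∘ anti`. -/
def gantar (A : Mould R G H) : Mould R G H := invmu (pari (anti A))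

/-- The flexion marker `⌈a⌉b`. -/
def flexUL (a b : List (G × H)) : List (G × H) :=
  match b with
  | [] => []
  | p :: bs => (uSum a + p.1, p.2) :: bs

/-- The flexion marker `a⌈b⌉`. -/
def flexUR : List (G × H) → List (G × H) → List (G × H)
  | [], _ => []
  | [p], b => [(p.1 + uSum b, p.2)]
  | p :: q :: ps, b => p :: flexUR (q :: ps) b

/-- The flexion marker `⌊a⌋b`. -/
def flexLL (a b : List (G × H)) : List (G × H) :=
  b.map fun p => (p.1, p.2 - lastV a)

/-- The flexion marker `a⌊b⌋`. -/
def flexLR (a b : List (G × H)) : List (G × H) :=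
  a.map fun p => (p.1, p.2 - headV b)

/-- All factorizations `w = a₁b₁c₁⋯a_sb_sc_s` into (possibly empty) consecutive
blocks with every `b_i ≠ ∅` and `c_i a_{i+1} ≠ ∅` for `1 ≤ i ≤ s-1`; the flag
records whether the first block `a₁` may be empty. -/
def facs {α : Type*} : Bool → List α → List (List (List α × List α × List α))
  | _, [] => [[]]
  | aFree, x :: xs =>
    (List.range ((x :: xs).length + 1)).flatMap fun i =>
      if i = 0 ∧ aFree = false then []
      else
        (List.range (((x :: xs).drop i).length)).flatMap fun j =>
          (List.range ((((x :: xs).drop i).drop (j + 1)).length + 1)).flatMap fun k =>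
            (facs (!((((x :: xs).drop i).drop (j + 1)).take k).isEmpty)
                ((((x :: xs).drop i).drop (j + 1)).drop k)).map
              (fun L =>
                ((x :: xs).take i,
                 ((x :: xs).drop i).take (j + 1),
                 (((x :: xs).drop i).drop (j + 1)).take k) :: L)
  termination_by _ w => w.length
  decreasing_by
    simp only [List.length_drop, List.length_cons]
    omega

/-- The block `⌈a⌉b⌈c⌉` attached to a factorization triple `(a, b, c)`. -/
def blockArg (t : List (G × H) × List (G × H) × List (G × H)) : List (G × H) :=
  flexUL t.1 (flexUR t.2.1 t.2.2)

/-- The operator `gaxit(A₁, A₂)`. -/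
def gaxit (A₁ A₂ : Mould R G H) (B : Mould R G H) : Mould R G H := fun w =>
  match w with
  | [] => B []
  | x :: xs =>
      ((facs true (x :: xs)).map fun L =>
        B (L.flatMap blockArg) *
          (L.map fun t => A₁ (flexLR t.1 t.2.1) * A₂ (flexLL t.2.1 t.2.2)).prod).sum

/-- `gamit(A) := gaxit(A, 1)`. -/
def gamit (A : Mould R G H) : Mould R G H → Mould R G H := gaxit A muOne

/-- `ganit(A) := gaxit(1, A)`. -/
def ganit (A : Mould R G H) : Mould R G H → Mould R G H := gaxit muOne A

/-- `garit(B) := gaxit(B, invmu(B))`. -/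
def garit (B : Mould R G H) : Mould R G H → Mould R G H := gaxit B (invmu B)

/-- `gari(A, B) := mmu(garit(B)(A), B)`. -/
def gari (A B : Mould R G H) : Mould R G H := mmu (garit B A) B

/-- The `gari`-inverse (via choice; for `B ∈ MU(R)` it is the unique two-sided
`gari`-inverse of `B`). -/
noncomputable def invgari (B : Mould R G H) : Mould R G H :=
  letI := Classical.propDecidable
  if h : ∃ C : Mould R G H, gari C B = muOne ∧ gari B C = muOne then h.choose else muOne

/-- `gani(A, B) := mmu(B, ganit(B)(A))`. -/
def gani (A B : Mould R G H) : Mould R G H := mmu B (ganit B A)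

/-- The `gani`-inverse (via choice). -/
noncomputable def invgani (A : Mould R G H) : Mould R G H :=
  letI := Classical.propDecidable
  if h : ∃ C : Mould R G H, gani C A = muOne ∧ gani A C = muOne then h.choose else muOne

/-- The pair operation `gaxi`. -/
def gaxi (p q : Mould R G H × Mould R G H) : Mould R G H × Mould R G H :=
  (mmu (gaxit q.1 q.2 p.1) q.1, mmu q.2 (gaxit q.1 q.2 p.2))

/-- The operator `amit(X)`. -/
def amit (X : Mould R G H) (B : Mould R G H) : Mould R G H := fun w =>
  ∑ i ∈ Finset.range (w.length + 1), ∑ j ∈ Finset.range (w.length + 1),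
    if i < j ∧ j < w.length then
      X (w.take i ++ flexUL ((w.drop i).take (j - i)) (w.drop j)) *
        B (flexLR ((w.drop i).take (j - i)) (w.drop j))
    else 0

/-- The operator `anit(X)`. -/
def anit (X : Mould R G H) (B : Mould R G H) : Mould R G H := fun w =>
  ∑ i ∈ Finset.range (w.length + 1), ∑ j ∈ Finset.range (w.length + 1),
    if 0 < i ∧ i < j then
      X (flexUR (w.take i) ((w.drop i).take (j - i)) ++ w.drop j) *
        B (flexLL (w.take i) ((w.drop i).take (j - i)))
    else 0

/-- `arit(X) := amit(X) - anit(X)`. -/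
def arit (X : Mould R G H) (B : Mould R G H) : Mould R G H := fun w =>
  amit X B w - anit X B w

/-- `preari(A, B) := arit(B)(A) + mmu(A, B)`. -/
def preari (A B : Mould R G H) : Mould R G H := fun w => arit B A w + mmu A B w

/-- `ari(A, B) := preari(A, B) - preari(B, A)`. -/
def ari (A B : Mould R G H) : Mould R G H := fun w => preari A B w - preari B A w

/-- Left-nested `preari`-powers: `preari(A, A, …, A)` (`n` arguments). -/
def preariPow (A : Mould R G H) : ℕ → Mould R G H
  | 0 => muOne
  | 1 => A
  | n + 2 => preari (preariPow A (n + 1)) A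

/-- `expari(A) = 1 + Σ_{n≥1} preari(A,…,A)/n!`; the sum is computed pointwise,
using that the `n`-th term vanishes in lengths `< n`. -/
def expari (A : Mould R G H) : Mould R G H := fun w =>
  ∑ n ∈ Finset.range (w.length + 1), (n.factorial : ℚ)⁻¹ • preariPow A n w

/-- The bimoulds `fre_r`: `fre_1 := E`, `fre_{r+1} := arit(fre_r)(E)`. -/
def fre (E : Mould R G H) : ℕ → Mould R G H
  | 0 => fun _ => 0
  | 1 => E
  | n + 2 => arit (fre E (n + 1)) E

/-- Flexion units. -/
structure IsFlexionUnit (E : Mould R G H) : Prop where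
  empty : E [] = 0
  support : ∀ w : List (G × H), 2 ≤ w.length → E w = 0
  parity : ∀ (u : G) (v : H), E [(-u, -v)] = -E [(u, v)]
  tripartite : ∀ (u₁ u₂ : G) (v₁ v₂ : H),
    E [(u₁, v₁)] * E [(u₂, v₂)] =
      E [(u₁, v₁ - v₂)] * E [(u₁ + u₂, v₂)] + E [(u₁ + u₂, v₁)] * E [(u₂, v₂ - v₁)]

/-- A bimould `M` is push-neutral if `(id + push + ⋯ + push^{∘r})(M)` vanishes
in each length `r`. -/
def PushNeutral (M : Mould R G H) : Prop :=
  ∀ w : List (G × H), ∑ i ∈ Finset.range (w.length + 1), push^[i] M w = 0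

/-- `fez := invmu(1 - E)`. -/
def fez (E : Mould R G H) : Mould R G H := invmu (muOne - E)

/-- The bimould `fes`, by its explicit formula
`fes(u₁,…,u_r; v₁,…,v_r) = ∏ᵢ E(u₁+⋯+uᵢ; vᵢ − v_{i+1})` with `v_{r+1} := 0`. -/
def fesExpl (E : Mould R G H) : Mould R G H := fun w =>
  ∏ i ∈ Finset.range w.length,
    E [(uSum (w.take (i + 1)), headV (w.drop i) - headV (w.drop (i + 1)))]

/-- All shuffles of two sequences (with multiplicity). -/
def shuffles {α : Type*} : List α → List α → List (List α)
  | [], w => [w]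
  | x :: xs, [] => [x :: xs]
  | x :: xs, y :: ys =>
      ((shuffles xs (y :: ys)).map (x :: ·)) ++ ((shuffles (x :: xs) ys).map (y :: ·))
  termination_by a b => a.length + b.length
  decreasing_by
    · simp only [List.length_cons]; omega
    · simp only [List.length_cons]; omega

/-- Symmetrality. -/
def Symmetral (A : Mould R G H) : Prop :=
  ∀ w w' : List (G × H), w ≠ [] → w' ≠ [] →
    ((shuffles w w').map A).sum = A w * A w'

/-- Alternality. -/
def Alternal (A : Mould R G H) : Prop :=
  ∀ w w' : List (G × H), w ≠ [] → w' ≠ [] →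
    ((shuffles w w').map A).sum = 0

/-- `gepar(A) := mmu(anti(swap(A)), swap(A))`. -/
def gepar (A : Mould R G H) : Mould R H G := mmu (anti (swap A)) (swap A)

/-- `der`: multiplication by the length. -/
def der (A : Mould R G H) : Mould R G H := fun w => (w.length : R) * A w

/-- `slash(A) := gari(neg(A), invgari(A))`. -/
noncomputable def slash (A : Mould R G H) : Mould R G H := gari (neg A) (invgari A)

/-- `crash(B) := mmu((push∘swap∘invmu∘invgari∘swap)(B), (swap∘invgari∘swap)(B))`. -/
noncomputable def crash (B : Mould R G H) : Mould R G H :=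
  mmu (push (swap (invmu (invgari (swap B))))) (swap (invgari (swap B)))

/-- Formal derivative of a power series. -/
noncomputable def psDeriv (g : PowerSeries R) : PowerSeries R :=
  PowerSeries.mk fun m => ((m + 1 : ℕ) : R) * PowerSeries.coeff (R := R) (m + 1) g

/-- `f_*(x) = Σ_{r≥1} ε_r x^{r+1}`. -/
noncomputable def fstarPS (ε : ℕ → R) : PowerSeries R :=
  PowerSeries.mk fun m => if 2 ≤ m then ε (m - 1) else 0

/-- `exp(f_*(x) d/dx)(x)`, computed coefficientwise (only finitely many terms
contribute to each coefficient, since `f_* ∈ x²R[[x]]`). -/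
noncomputable def expDX (ε : ℕ → R) : PowerSeries R :=
  PowerSeries.mk fun m =>
    ∑ n ∈ Finset.range (m + 1),
      (n.factorial : ℚ)⁻¹ •
        PowerSeries.coeff (R := R) m ((fun g => fstarPS ε * psDeriv g)^[n] PowerSeries.X)

/-- `ε` is the family of coefficients of the infinitesimal generator of
`f ∈ GIFF_x(R)`. -/
noncomputable def IsGenerator (ε : ℕ → R) (f : PowerSeries R) : Prop :=
  expDX ε = f

/-- The mould `Σ_{r≥1} ε_r · fre_r` associated to a flexion unit `E` and a
coefficient family `ε`. -/
def freSum (E : Mould R G H) (ε : ℕ → R) : Mould R G H :=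
  fun w => ε w.length * fre E w.length w

/-- `Se(f) := expari(Σ_{r≥1} ε_r^f · fre_r)` where `ε^f` is the family of
coefficients of the infinitesimal generator of `f`. -/
def SeGen (E : Mould R G H) (ε : ℕ → R) : Mould R G H := expari (freSum E ε)

/-- The power series `re(x) = 1 - exp(-x)`. -/
noncomputable def rePS (R : Type*) [CommRing R] [Algebra ℚ R] : PowerSeries R :=
  PowerSeries.mk fun m =>
    if m = 0 then 0 else algebraMap ℚ R ((-1 : ℚ) ^ (m + 1) / m.factorial)


/-- All factorizations `w = a₁x₁c₁⋯a_tx_tc_t` into consecutive blocks in which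
every `x_j` is a single letter and the blocks `a_j, c_j` may be empty. -/
def sfacs {α : Type*} : List α → List (List (List α × α × List α))
  | [] => [[]]
  | x :: xs =>
      (List.range (xs.length + 1)).flatMap fun i =>
        (List.range (((x :: xs).drop (i + 1)).length + 1)).flatMap fun k =>
          (sfacs (((x :: xs).drop (i + 1)).drop k)).map fun L =>
            ((x :: xs).take i, (x :: xs).getD i x, ((x :: xs).drop (i + 1)).take k) :: L
  termination_by w => w.length
  decreasing_by
    simp only [List.length_drop, List.length_cons]
    omega

/-- The inverse of a bijection of `BIMU(R)`. -/
noncomputable def minv (g : Mould R G H → Mould R G H) : Mould R G H → Mould R G H :=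
  @Function.invFun (Mould R G H) (Mould R G H) ⟨fun _ => 0⟩ g

/-- Membership of a pair of bimoulds in `MU(R) × MU(R)`. -/
def MUpair (p : Mould R G H × Mould R G H) : Prop := p.1 [] = 1 ∧ p.2 [] = 1

set_option linter.unusedSectionVars false

lemma shuffles_nil_left {α : Type*} (w : List α) : shuffles ([] : List α) w = [w] := by
  rw [shuffles]

lemma shuffles_nil_right {α : Type*} (w : List α) : shuffles w ([] : List α) = [w] := by
  cases w <;> rw [shuffles]

lemma shuffles_cons_cons {α : Type*} (x y : α) (xs ys : List α) : shuffles (x::xs) (y::ys) =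
    ((shuffles xs (y :: ys)).map (x :: ·)) ++ ((shuffles (x :: xs) ys).map (y :: ·)) := by
  rw [shuffles]

/-- The shuffle antipode identity, applied to an arbitrary mould. -/
lemma alt_shuffle_sum (A : Mould R G H) (w : List (G × H)) (hw : w ≠ []) :
    ∑ i ∈ Finset.range (w.length + 1),
      (-1 : R) ^ i * ((shuffles (w.take i).reverse (w.drop i)).map A).sum = 0 := by
  have hr : 0 < w.length := List.length_pos_iff.mpr hw
  obtain ⟨m, hm⟩ : ∃ m, w.length = m + 1 := ⟨w.length - 1, by omega⟩
  set F : ℕ → R := fun i =>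
    ((shuffles (w.take i).reverse (w.drop (i+1))).map (fun s => A (w.getD i 0 :: s))).sum with hF
  set S : ℕ → R := fun i => ((shuffles (w.take i).reverse (w.drop i)).map A).sum with hS
  have h0 : S 0 = F 0 := by
    simp only [hS, hF, List.take_zero, List.reverse_nil, List.drop_zero, shuffles_nil_left,
      List.map_cons, List.map_nil, List.sum_cons, List.sum_nil, add_zero]
    rw [List.getD_eq_getElem w 0 hr, ← List.drop_eq_getElem_cons hr, List.drop_zero]
  have htm : w.take (m+1) = w.take m ++ [w[m]'(by omega)] := by
    rw [List.take_succ, List.getElem?_eq_getElem (by omega : m < w.length)]; rfl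
  have hlast : S (m + 1) = F m := by
    have hweq : w = w.take m ++ [w[m]'(by omega)] := by
      rw [← htm, ← hm, List.take_length]
    simp only [hS, hF, ← hm, List.drop_length, List.take_length, shuffles_nil_right,
      List.map_cons, List.map_nil, List.sum_cons, List.sum_nil, add_zero]
    rw [List.getD_eq_getElem w 0 (by omega : m < w.length)]
    have hrev : w.reverse = w[m]'(by omega) :: (w.take m).reverse := by
      conv_lhs => rw [hweq]
      rw [List.reverse_append, List.reverse_singleton, List.singleton_append]
    rw [hrev]
  have hmid : ∀ j, j + 1 < w.length → S (j + 1) = F j + F (j + 1) := by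
    intro j hj
    have hj' : j < w.length := by omega
    have ht : w.take (j+1) = w.take j ++ [w[j]] := by
      rw [List.take_succ, List.getElem?_eq_getElem hj']; rfl
    have hd := List.drop_eq_getElem_cons hj
    simp only [hS, hF, List.getD_eq_getElem w 0 hj', List.getD_eq_getElem w 0 hj, ht]
    rw [List.reverse_append, List.reverse_singleton, List.singleton_append, hd,
      shuffles_cons_cons, List.map_append, List.sum_append, List.map_map, List.map_map]
    rw [← hd]
    simp [Function.comp_def]
  have hgoal : ∑ i ∈ Finset.range (m + 1 + 1), (-1 : R) ^ i * S i = 0 := by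
    rw [Finset.sum_range_succ, Finset.sum_range_succ']
    have hmidsum : ∑ i ∈ Finset.range m, (-1:R)^(i+1) * S (i+1)
        = ∑ i ∈ Finset.range m, ((-1:R)^(i+1) * F (i+1) - (-1:R)^i * F i) := by
      refine Finset.sum_congr rfl fun i hi => ?_
      rw [Finset.mem_range] at hi
      rw [hmid i (by omega)]
      ring
    rw [hmidsum, Finset.sum_range_sub (f := fun i => (-1:R)^i * F i), hlast, h0]
    ring
  rw [hm]
  exact hgoal

/-- Uniqueness of the right `mmu`-inverse computed by `invmu`. -/
lemma invmu_eq_of_mmu (B C : Mould R G H) (hB : B [] = 1) (h : mmu B C = muOne) :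
    invmu B = C := by
  have key : ∀ n (w : List (G × H)), w.length ≤ n → invmuAux B n w = C w := by
    intro n
    induction n with
    | zero =>
      intro w hw
      have hwn : w = [] := List.length_eq_zero_iff.mp (Nat.le_zero.mp hw)
      subst hwn
      have h0 := congrFun h []
      simp [mmu, muOne, hB] at h0
      simp [invmuAux, h0]
    | succ n ih =>
      intro w hw
      match w with
      | [] =>
        have h0 := congrFun h []
        simp [mmu, muOne, hB] at h0
        simp [invmuAux, h0]
      | x :: xs =>
        have hlen : xs.length ≤ n := by
          simpa using hw
        have hx := congrFun h (x :: xs)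
        rw [mmu, Finset.sum_range_succ'] at hx
        simp only [List.take_zero, List.drop_zero, hB, one_mul, List.drop_succ_cons,
          List.length_cons, muOne] at hx
        simp only [invmuAux]
        have hcongr : ∀ i ∈ Finset.range (xs.length + 1),
            B ((x :: xs).take (i + 1)) * invmuAux B n (xs.drop i)
              = B ((x :: xs).take (i + 1)) * C (xs.drop i) := by
          intro i _
          rw [ih (xs.drop i) (by simp only [List.length_drop]; omega)]
        rw [Finset.sum_congr rfl hcongr]
        linear_combination -hx
  funext w
  exact key w.length w le_rfl

lemma mmu_pari_anti (A : Mould R G H) (h1 : A [] = 1) (hA : Symmetral A) :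
    mmu (pari (anti A)) A = muOne := by
  funext w
  match w with
  | [] => simp [mmu, pari, anti, muOne, h1]
  | x :: xs =>
    have key := alt_shuffle_sum A (x :: xs) (by simp)
    rw [mmu]
    have hcongr : ∀ i ∈ Finset.range ((x :: xs).length + 1),
        pari (anti A) ((x :: xs).take i) * A ((x :: xs).drop i)
          = (-1 : R) ^ i *
              ((shuffles ((x :: xs).take i).reverse ((x :: xs).drop i)).map A).sum := by
      intro i hi
      rw [Finset.mem_range, Nat.lt_succ_iff] at hi
      rw [pari, anti, List.length_take, min_eq_left hi]
      rcases Nat.eq_zero_or_pos i with h0i | hpos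
      · subst h0i
        simp [shuffles_nil_left, h1]
      rcases eq_or_lt_of_le hi with hilast | himid
      · rw [hilast]
        simp [List.take_length, List.drop_length, shuffles_nil_right, h1]
      · have ht : ((x :: xs).take i).reverse ≠ [] := by
          simp only [ne_eq, List.reverse_eq_nil_iff, List.take_eq_nil_iff]
          push_neg
          constructor <;> simp <;> omega
        have hd : (x :: xs).drop i ≠ [] := by
          intro hcon
          have := congrArg List.length hcon
          simp only [List.length_drop, List.length_nil] at this
          omega
        rw [hA _ _ ht hd]
        ring
    rw [Finset.sum_congr rfl hcongr, key]
    rfl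

lemma alternal_mantar (A : Mould R G H) (h0 : A [] = 0) (hA : Alternal A) :
    mantar A = A := by
  funext w
  match w with
  | [] => simp [mantar, h0]
  | x :: xs =>
    have key := alt_shuffle_sum A (x :: xs) (by simp)
    simp only [List.length_cons] at key
    rw [Finset.sum_range_succ, Finset.sum_range_succ'] at key
    have hmid : ∑ i ∈ Finset.range xs.length,
        (-1 : R) ^ (i + 1) *
          ((shuffles ((x :: xs).take (i + 1)).reverse ((x :: xs).drop (i + 1))).map A).sum
        = 0 := by
      refine Finset.sum_eq_zero fun i hi => ?_
      rw [Finset.mem_range] at hi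
      have ht : ((x :: xs).take (i + 1)).reverse ≠ [] := by
        simp [List.take_succ_cons]
      have hd : (x :: xs).drop (i + 1) ≠ [] := by
        intro hcon
        have := congrArg List.length hcon
        simp only [List.length_drop, List.length_cons, List.length_nil] at this
        omega
      rw [hA _ _ ht hd, mul_zero]
    rw [hmid] at key
    have h0t : ((shuffles ((x :: xs).take 0).reverse ((x :: xs).drop 0)).map A).sum
        = A (x :: xs) := by
      simp [shuffles_nil_left]
    have hlt : ((shuffles ((x :: xs).take (xs.length + 1)).reverse
        ((x :: xs).drop (xs.length + 1))).map A).sum = A (x :: xs).reverse := by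
      have : (x :: xs).take (xs.length + 1) = x :: xs := by
        apply List.take_of_length_le
        simp
      rw [this]
      have : (x :: xs).drop (xs.length + 1) = [] := by
        apply List.drop_eq_nil_of_le
        simp
      rw [this, shuffles_nil_right]
      simp
    rw [h0t, hlt] at key
    simp only [mantar, List.length_cons]
    linear_combination -key

/-- symmetral bimoulds are `gantar`-invariant and alternal bimoulds
are `mantar`-invariant. -/
theorem symmetral_gantar_alternal_mantar :
    (∀ A : Mould R G H, A [] = 1 → Symmetral A → gantar A = A) ∧
    (∀ A : Mould R G H, A [] = 0 → Alternal A → mantar A = A) := by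
  refine ⟨fun A h1 hA => ?_, fun A h0 hA => alternal_mantar A h0 hA⟩
  exact invmu_eq_of_mmu (pari (anti A)) A (by simp [pari, anti, h1]) (mmu_pari_anti A h1 hA)

end Flexion
end

section
/- Let E be a bimould supported in length 1 (E(∅)=0 and E vanishes in all lengths ≥2). The following are equivalent: (1) E is a flexion unit; (2) both E and mmu(E,E) are push-neutral; (3) the n-fold product mmu(E,…,E) is push-neutral for every n≥1. -/
namespace Flexion

variable {R : Type*} [CommRing R] [Algebra ℚ R]
variable {G H : Type*} [AddCommGroup G] [AddCommGroup H]

set_option linter.unusedSectionVars false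

section Aux

variable (e : G × H → R)

/-- Word transformation underlying `push`. -/
def Tmap : List (G × H) → List (G × H)
  | [] => []
  | x :: xs => (-uSum (x :: xs), -lastV (x :: xs)) ::
      ((x :: xs).dropLast.map fun p => (p.1, p.2 - lastV (x :: xs)))

lemma push_apply (A : Mould R G H) (w : List (G × H)) : push A w = A (Tmap w) := by
  cases w <;> rfl

lemma push_iterate (A : Mould R G H) (k : ℕ) (w : List (G × H)) :
    push^[k] A w = A (Tmap^[k] w) := by
  induction k generalizing w with
  | zero => rfl
  | succ k ih =>
    rw [Function.iterate_succ_apply', push_apply, ih, ← Function.iterate_succ_apply]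

lemma Tmap_length (w : List (G × H)) : (Tmap w).length = w.length := by
  cases w with
  | nil => rfl
  | cons x xs => simp [Tmap]

lemma Tmap_iterate_length (k : ℕ) (w : List (G × H)) : (Tmap^[k] w).length = w.length := by
  induction k generalizing w with
  | zero => rfl
  | succ k ih => rw [Function.iterate_succ_apply, ih, Tmap_length]

lemma uSum_nil : uSum ([] : List (G × H)) = 0 := rfl

lemma uSum_cons (p : G × H) (l : List (G × H)) : uSum (p :: l) = p.1 + uSum l := by
  simp [uSum]

lemma uSum_append (l₁ l₂ : List (G × H)) : uSum (l₁ ++ l₂) = uSum l₁ + uSum l₂ := by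
  simp [uSum]

lemma uSum_vshift (c : H) (l : List (G × H)) :
    uSum (l.map fun p => (p.1, p.2 - c)) = uSum l := by
  simp [uSum, List.map_map, Function.comp_def]

lemma lastV_concat (ys : List (G × H)) (y : G × H) : lastV (ys ++ [y]) = y.2 := by
  induction ys with
  | nil => rfl
  | cons a as ih =>
    cases as with
    | nil => rfl
    | cons b bs => simpa [lastV] using ih

/-- Product `∏ e(u_q, v_q - x)` over a list. -/
def Pprod (x : H) (L : List (G × H)) : R := (L.map fun q => e (q.1, q.2 - x)).prod

lemma Pprod_nil (x : H) : Pprod e x [] = 1 := rfl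

lemma Pprod_cons (x : H) (p : G × H) (l : List (G × H)) :
    Pprod e x (p :: l) = e (p.1, p.2 - x) * Pprod e x l := rfl

lemma Pprod_append (x : H) (l₁ l₂ : List (G × H)) :
    Pprod e x (l₁ ++ l₂) = Pprod e x l₁ * Pprod e x l₂ := by
  simp [Pprod]

/-- `Ssum e pre L = Σ_m  Pprod v_m (pre ++ L.take m) * Pprod v_m (L.drop (m+1))`. -/
def Ssum : List (G × H) → List (G × H) → R
  | _, [] => 0
  | pre, p :: rest => Pprod e p.2 pre * Pprod e p.2 rest + Ssum (pre ++ [p]) rest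

def vshift (c : H) (L : List (G × H)) : List (G × H) := L.map fun p => (p.1, p.2 - c)

def extw (w : List (G × H)) : List (G × H) := (-uSum w, 0) :: w

def termAt : List (G × H) → R
  | [] => 0
  | p :: t => Pprod e p.2 t

lemma termAt_vshift (c : H) (L : List (G × H)) : termAt e (vshift c L) = termAt e L := by
  cases L with
  | nil => rfl
  | cons p t =>
    show Pprod e (p.2 - c) (vshift c t) = Pprod e p.2 t
    simp [Pprod, vshift, List.map_map, Function.comp_def, sub_sub_sub_cancel_right]

lemma vshift_rotate (c : H) (L : List (G × H)) (m : ℕ) :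
    (vshift c L).rotate m = vshift c (L.rotate m) := by
  simp [vshift, List.map_rotate]

lemma vshift_vshift (c d : H) (L : List (G × H)) :
    vshift c (vshift d L) = vshift (d + c) L := by
  simp [vshift, List.map_map, Function.comp_def, sub_sub]

lemma Tmap_concat (ys : List (G × H)) (y : G × H) :
    Tmap (ys ++ [y]) = (-uSum (ys ++ [y]), -y.2) :: (ys.map fun p => (p.1, p.2 - y.2)) := by
  cases ys with
  | nil => simp [Tmap, lastV, uSum]
  | cons a as =>
    have h1 : lastV (a :: (as ++ [y])) = y.2 := lastV_concat (a :: as) y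
    have h2 : (a :: (as ++ [y])).dropLast = a :: as := by
      simpa using List.dropLast_concat (l₁ := a :: as) (b := y)
    simp [Tmap, h1, h2]

lemma extw_Tmap (ys : List (G × H)) (y : G × H) :
    extw (Tmap (ys ++ [y])) =
      vshift y.2 ((extw (ys ++ [y])).rotate (ys ++ [y]).length) := by
  have h2 : (extw (ys ++ [y])).rotate (ys ++ [y]).length
      = y :: (-uSum (ys ++ [y]), (0 : H)) :: ys := by
    have h3 : extw (ys ++ [y]) = ((-uSum (ys ++ [y]), (0 : H)) :: ys) ++ [y] := by
      simp [extw]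
    rw [h3, List.rotate_eq_drop_append_take (by simp),
      List.drop_left' (by simp), List.take_left' (by simp)]
    rfl
  rw [Tmap_concat, h2]
  show ((-uSum ((-uSum (ys ++ [y]), -y.2) :: (ys.map fun p => (p.1, p.2 - y.2))), (0 : H)) :: _) = _
  simp only [vshift, extw, List.map_cons, uSum_cons, uSum_vshift]
  have h4 : uSum (ys ++ [y]) = uSum ys + y.1 := by
    rw [uSum_append]; simp [uSum]
  rw [h4]
  simp only [List.cons.injEq, Prod.mk.injEq, sub_self, zero_sub, and_true, true_and]
  abel

lemma extw_Tmap_iter (w : List (G × H)) (hw : w ≠ []) (k : ℕ) :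
    ∃ c : H, extw (Tmap^[k] w) = vshift c ((extw w).rotate (k * w.length)) := by
  induction k with
  | zero =>
    refine ⟨0, ?_⟩
    simp [vshift, List.rotate_zero, sub_zero]
  | succ k ih =>
    obtain ⟨c, hc⟩ := ih
    have hne : Tmap^[k] w ≠ [] := by
      intro h
      apply hw
      have hl := Tmap_iterate_length k w
      rw [h] at hl
      exact List.eq_nil_of_length_eq_zero hl.symm
    obtain ⟨ys, y, hys⟩ := (Tmap^[k] w).eq_nil_or_concat.resolve_left hne
    rw [List.concat_eq_append] at hys
    refine ⟨c + y.2, ?_⟩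
    have hlen : (ys ++ [y]).length = w.length := by
      rw [← hys]; exact Tmap_iterate_length k w
    rw [Function.iterate_succ_apply', hys, extw_Tmap, ← hys, hys, hlen, ← hys, hc,
      vshift_rotate, List.rotate_rotate, vshift_vshift]
    congr 2
    ring

lemma Ssum_eq (L : List (G × H)) : ∀ pre : List (G × H),
    Ssum e pre L = ∑ j ∈ Finset.range L.length,
      Pprod e ((L.getD j (0, 0)).2) (pre ++ L.take j) *
        Pprod e ((L.getD j (0, 0)).2) (L.drop (j + 1)) := by
  induction L with
  | nil => intro pre; simp [Ssum]
  | cons p rest ih =>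
    intro pre
    show Pprod e p.2 pre * Pprod e p.2 rest + Ssum e (pre ++ [p]) rest = _
    rw [ih, List.length_cons, Finset.sum_range_succ', add_comm]
    congr 1
    · apply Finset.sum_congr rfl
      intro i _
      simp only [List.getD_cons_succ, List.take_succ_cons, List.drop_succ_cons,
        ← List.append_cons]
    · simp

lemma sum_termAt_rotate (M : List (G × H)) :
    ∑ j ∈ Finset.range M.length, termAt e (M.rotate j) = Ssum e [] M := by
  rw [Ssum_eq]
  apply Finset.sum_congr rfl
  intro j hj
  rw [Finset.mem_range] at hj
  rw [List.rotate_eq_drop_append_take hj.le, List.drop_eq_getElem_cons hj]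
  show Pprod e (M[j].2) (M.drop (j + 1) ++ M.take j) = _
  rw [Pprod_append, List.getD_eq_getElem _ _ hj, List.nil_append, mul_comm]

lemma Ssum_merge
    (htri : ∀ (u₁ u₂ : G) (v₁ v₂ x : H),
      e (u₁, v₁ - x) * e (u₂, v₂ - x) =
        e (u₁, v₁ - v₂) * e (u₁ + u₂, v₂ - x) + e (u₁ + u₂, v₁ - x) * e (u₂, v₂ - v₁))
    (a b : G × H) (rest : List (G × H)) : ∀ post : List (G × H),
      Ssum e (a :: b :: post) rest =
        e (a.1, a.2 - b.2) * Ssum e ((a.1 + b.1, b.2) :: post) rest +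
          e (b.1, b.2 - a.2) * Ssum e ((a.1 + b.1, a.2) :: post) rest := by
  induction rest with
  | nil => intro post; simp [Ssum]
  | cons q r ih =>
    intro post
    simp only [Ssum, List.cons_append, Pprod_cons]
    rw [ih (post ++ [q])]
    linear_combination (Pprod e q.2 post * Pprod e q.2 r) * htri a.1 b.1 a.2 b.2 q.2

lemma Ssum_core
    (hpar : ∀ (u : G) (v : H), e (-u, -v) = - e (u, v))
    (htri : ∀ (u₁ u₂ : G) (v₁ v₂ x : H),
      e (u₁, v₁ - x) * e (u₂, v₂ - x) =
        e (u₁, v₁ - v₂) * e (u₁ + u₂, v₂ - x) + e (u₁ + u₂, v₁ - x) * e (u₂, v₂ - v₁)) :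
    ∀ (N : ℕ) (L : List (G × H)), L.length ≤ N → uSum L = 0 → 2 ≤ L.length →
      Ssum e [] L = 0 := by
  intro N
  induction N with
  | zero => intro L h1 _ h2; omega
  | succ N ih =>
    rintro (_ | ⟨a, _ | ⟨b, rest⟩⟩) hlen hsum hlen2
    · simp at hlen2
    · simp at hlen2
    cases rest with
    | nil =>
      have hb1 : b.1 = -a.1 := by
        simp only [uSum_cons, uSum_nil, add_zero] at hsum
        rw [eq_neg_iff_add_eq_zero, add_comm]
        exact hsum
      show Pprod e a.2 [] * Pprod e a.2 [b] + (Pprod e b.2 ([] ++ [a]) * Pprod e b.2 [] +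
        Ssum e (([] ++ [a]) ++ [b]) []) = 0
      simp only [Ssum, Pprod_nil, Pprod_cons, List.nil_append, one_mul, mul_one, add_zero]
      have h2 : b.2 - a.2 = -(a.2 - b.2) := (neg_sub _ _).symm
      rw [hb1, h2, hpar]
      ring
    | cons cc r =>
      have hIH : ∀ x : H, Ssum e [(a.1 + b.1, x)] (cc :: r) = - Pprod e x (cc :: r) := by
        intro x
        have h0 : Ssum e [] ((a.1 + b.1, x) :: cc :: r) = 0 := by
          apply ih
          · simp only [List.length_cons] at hlen ⊢; omega
          · simp only [uSum_cons] at hsum ⊢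
            rw [add_assoc]
            exact hsum
          · simp
        have hunf : Ssum e [] ((a.1 + b.1, x) :: cc :: r) =
            Pprod e x [] * Pprod e x (cc :: r) + Ssum e ([] ++ [(a.1 + b.1, x)]) (cc :: r) :=
          rfl
        rw [hunf, Pprod_nil, one_mul, List.nil_append] at h0
        linear_combination h0
      show Pprod e a.2 [] * Pprod e a.2 (b :: cc :: r) + (Pprod e b.2 ([] ++ [a]) *
          Pprod e b.2 (cc :: r) + Ssum e (([] ++ [a]) ++ [b]) (cc :: r)) = 0
      have hab : (([] : List (G × H)) ++ [a]) ++ [b] = a :: b :: ([] : List (G × H)) := rfl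
      rw [hab, Ssum_merge e htri a b (cc :: r) [], hIH b.2, hIH a.2]
      simp only [Pprod_nil, Pprod_cons, List.nil_append, one_mul, mul_one]
      ring

lemma rotate_sum_reindex (f : List (G × H) → R) (M : List (G × H)) (n : ℕ)
    (hM : M.length = n + 1) :
    ∑ k ∈ Finset.range (n + 1), f (M.rotate (k * n)) =
      ∑ j ∈ Finset.range (n + 1), f (M.rotate j) := by
  have key : ∀ k ∈ Finset.range (n + 1),
      f (M.rotate (k * n)) = f (M.rotate ((n + 1 - k) % (n + 1))) := by
    intro k hk
    rw [Finset.mem_range] at hk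
    rw [← List.rotate_mod M (k * n), hM]
    congr 2
    cases k with
    | zero => simp
    | succ k' =>
      obtain ⟨m, rfl⟩ : ∃ m, n = k' + m := ⟨n - k', by omega⟩
      have h1 : (k' + 1) * (k' + m) = m + k' * (k' + m + 1) := by ring
      have h2 : k' + m + 1 - (k' + 1) = m := by omega
      rw [h1, h2, Nat.add_mul_mod_self_right, Nat.mod_eq_of_lt (by omega)]
  rw [Finset.sum_congr rfl key, Finset.sum_range_succ' _ n,
    Finset.sum_range_succ' (fun j => f (M.rotate j)) n]
  congr 1
  · rw [← Finset.sum_range_reflect (fun i => f (M.rotate (i + 1))) n]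
    apply Finset.sum_congr rfl
    intro i hi
    rw [Finset.mem_range] at hi
    congr 2
    rw [Nat.mod_eq_of_lt (by omega)]
    omega
  · congr 1
    simp

lemma mmuPow_apply (E : Mould R G H) (h0 : E [] = 0)
    (hsupp : ∀ w : List (G × H), 2 ≤ w.length → E w = 0) (n : ℕ) :
    ∀ w : List (G × H),
      mmuPow E n w = if w.length = n then (w.map fun p => E [p]).prod else 0 := by
  induction n with
  | zero =>
    rintro (_ | ⟨x, xs⟩)
    · simp [mmuPow, muOne]
    · simp [mmuPow, muOne]
  | succ n ih =>
    rintro (_ | ⟨x, xs⟩)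
    · show mmu E (mmuPow E n) [] = _
      simp [mmu, h0]
    · show mmu E (mmuPow E n) (x :: xs) = _
      unfold mmu
      have hs : (∑ i ∈ Finset.range ((x :: xs).length + 1),
          E ((x :: xs).take i) * mmuPow E n ((x :: xs).drop i))
          = E ((x :: xs).take 1) * mmuPow E n ((x :: xs).drop 1) := by
        apply Finset.sum_eq_single_of_mem 1
        · rw [Finset.mem_range]; simp
        · intro i hi hne
          rw [Finset.mem_range, List.length_cons] at hi
          rcases Nat.lt_or_ge i 1 with h | h
          · interval_cases i
            simp [h0]
          · have h2 : 2 ≤ i := by omega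
            have hlen : ((x :: xs).take i).length = i := by
              rw [List.length_take, List.length_cons]
              omega
            rw [hsupp _ (by rw [hlen]; exact h2), zero_mul]
      rw [hs]
      simp only [List.take_succ_cons, List.take_zero, List.drop_succ_cons, List.drop_zero]
      rw [ih]
      by_cases hn : xs.length = n
      · simp [hn]
      · simp [hn, fun h => hn (Nat.succ_injective h)]

lemma mmuPow_one (E : Mould R G H) (h0 : E [] = 0)
    (hsupp : ∀ w : List (G × H), 2 ≤ w.length → E w = 0) :
    mmuPow E 1 = E := by
  funext w
  rw [mmuPow_apply E h0 hsupp]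
  rcases w with _ | ⟨p, _ | ⟨q, t⟩⟩
  · simp [h0]
  · simp
  · rw [if_neg (by simp), hsupp _ (by simp)]

lemma mmuPow_two (E : Mould R G H) (h0 : E [] = 0)
    (hsupp : ∀ w : List (G × H), 2 ≤ w.length → E w = 0) :
    mmuPow E 2 = mmu E E := by
  show mmu E (mmuPow E 1) = mmu E E
  rw [mmuPow_one E h0 hsupp]

lemma pushNeutral_mmuPow (E : Mould R G H) (hE : IsFlexionUnit E) (n : ℕ) (hn : 1 ≤ n) :
    PushNeutral (mmuPow E n) := by
  intro w
  set e : G × H → R := fun p => E [p] with he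
  have htri : ∀ (u₁ u₂ : G) (v₁ v₂ x : H),
      e (u₁, v₁ - x) * e (u₂, v₂ - x) =
        e (u₁, v₁ - v₂) * e (u₁ + u₂, v₂ - x) + e (u₁ + u₂, v₁ - x) * e (u₂, v₂ - v₁) := by
    intro u₁ u₂ v₁ v₂ x
    have h := hE.tripartite u₁ u₂ (v₁ - x) (v₂ - x)
    rw [sub_sub_sub_cancel_right, sub_sub_sub_cancel_right] at h
    exact h
  have hpar : ∀ (u : G) (v : H), e (-u, -v) = - e (u, v) := fun u v => hE.parity u v
  rw [Finset.sum_congr rfl fun i _ => push_iterate (mmuPow E n) i w]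
  by_cases hw : w.length = n
  · have hwne : w ≠ [] := by
      intro h
      rw [h] at hw
      simp at hw
      omega
    have hterm : ∀ i : ℕ, mmuPow E n (Tmap^[i] w) = termAt e (extw (Tmap^[i] w)) := by
      intro i
      rw [mmuPow_apply E hE.empty hE.support, if_pos (by rw [Tmap_iterate_length]; exact hw)]
      show _ = Pprod e 0 (Tmap^[i] w)
      simp [Pprod, he]
    calc ∑ i ∈ Finset.range (w.length + 1), mmuPow E n (Tmap^[i] w)
        = ∑ i ∈ Finset.range (w.length + 1), termAt e ((extw w).rotate (i * w.length)) := by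
          apply Finset.sum_congr rfl
          intro i _
          rw [hterm i]
          obtain ⟨c, hc⟩ := extw_Tmap_iter w hwne i
          rw [hc, termAt_vshift]
      _ = ∑ j ∈ Finset.range (w.length + 1), termAt e ((extw w).rotate j) :=
          rotate_sum_reindex (termAt e) (extw w) w.length (by simp [extw])
      _ = Ssum e [] (extw w) := by
          have hl : (extw w).length = w.length + 1 := by simp [extw]
          rw [← hl, sum_termAt_rotate]
      _ = 0 := by
          apply Ssum_core e hpar htri (w.length + 1) (extw w) (by simp [extw])
          · simp [extw, uSum_cons]
          · simp only [extw, List.length_cons]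
            omega
  · apply Finset.sum_eq_zero
    intro i _
    rw [mmuPow_apply E hE.empty hE.support, if_neg]
    rw [Tmap_iterate_length]
    exact hw

lemma parity_of_pushNeutral (E : Mould R G H) (hP : PushNeutral E) (u : G) (v : H) :
    E [(-u, -v)] = - E [(u, v)] := by
  have h := hP [(u, v)]
  rw [show ([((u : G), (v : H))] : List (G × H)).length + 1 = 2 from rfl,
    Finset.sum_range_succ, Finset.sum_range_succ, Finset.sum_range_zero,
    push_iterate, push_iterate] at h
  have h1 : Tmap [((u : G), (v : H))] = [(-u, -v)] := by
    simp [Tmap, uSum, lastV]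
  rw [Function.iterate_zero, Function.iterate_one, h1] at h
  simp only [id] at h
  linear_combination h

lemma mmuEE_apply₂ (E : Mould R G H) (h0 : E [] = 0) (p q : G × H) :
    mmu E E [p, q] = E [p] * E [q] := by
  show ∑ i ∈ Finset.range 3, E (List.take i [p, q]) * E (List.drop i [p, q]) = _
  rw [Finset.sum_range_succ, Finset.sum_range_succ, Finset.sum_range_succ,
    Finset.sum_range_zero]
  simp [h0]

lemma tripartite_of (E : Mould R G H) (h0 : E [] = 0)
    (hpar : ∀ (u : G) (v : H), E [(-u, -v)] = - E [(u, v)])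
    (hP : PushNeutral (mmu E E)) (u₁ u₂ : G) (v₁ v₂ : H) :
    E [(u₁, v₁)] * E [(u₂, v₂)] =
      E [(u₁, v₁ - v₂)] * E [(u₁ + u₂, v₂)] + E [(u₁ + u₂, v₁)] * E [(u₂, v₂ - v₁)] := by
  have h := hP [(u₁, v₁), (u₂, v₂)]
  rw [show ([((u₁ : G), (v₁ : H)), (u₂, v₂)] : List (G × H)).length + 1 = 3 from rfl,
    Finset.sum_range_succ, Finset.sum_range_succ, Finset.sum_range_succ,
    Finset.sum_range_zero, push_iterate, push_iterate, push_iterate] at h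
  have t1 : Tmap [((u₁ : G), (v₁ : H)), (u₂, v₂)] = [(-(u₁ + u₂), -v₂), (u₁, v₁ - v₂)] := by
    simp [Tmap, uSum, lastV]
  have t2 : Tmap [(-(u₁ + u₂), -v₂), ((u₁ : G), v₁ - v₂)] = [(u₂, v₂ - v₁), (-(u₁ + u₂), -v₁)] := by
    simp only [Tmap, uSum, lastV, List.map_cons, List.map_nil, List.sum_cons, List.sum_nil,
      List.dropLast_cons₂, List.dropLast_singleton, List.cons.injEq, Prod.mk.injEq, and_true]
    refine ⟨⟨by abel, by abel⟩, trivial, by abel⟩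
  simp only [Function.iterate_succ, Function.iterate_zero, Function.comp_apply, id_eq] at h
  rw [t1, t2, mmuEE_apply₂ E h0, mmuEE_apply₂ E h0, mmuEE_apply₂ E h0,
    hpar (u₁ + u₂) v₂, hpar (u₁ + u₂) v₁] at h
  linear_combination h


end Aux

/-- characterizations of flexion units by push-neutrality. -/
theorem flexion_unit_tfae (E : Mould R G H) (h0 : E [] = 0)
    (hsupp : ∀ w : List (G × H), 2 ≤ w.length → E w = 0) :
    (IsFlexionUnit E ↔ PushNeutral E ∧ PushNeutral (mmu E E)) ∧
    (IsFlexionUnit E ↔ ∀ n : ℕ, 1 ≤ n → PushNeutral (mmuPow E n)) := by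
  have fwd : IsFlexionUnit E → PushNeutral E ∧ PushNeutral (mmu E E) := by
    intro hE
    constructor
    · have h := pushNeutral_mmuPow E hE 1 le_rfl
      rwa [mmuPow_one E h0 hsupp] at h
    · have h := pushNeutral_mmuPow E hE 2 (by omega)
      rwa [mmuPow_two E h0 hsupp] at h
  have bwd : PushNeutral E → PushNeutral (mmu E E) → IsFlexionUnit E := by
    intro hP1 hP2
    exact ⟨h0, hsupp, parity_of_pushNeutral E hP1,
      tripartite_of E h0 (parity_of_pushNeutral E hP1) hP2⟩
  constructor
  · exact ⟨fun hE => fwd hE, fun h => bwd h.1 h.2⟩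
  · constructor
    · intro hE n hn
      exact pushNeutral_mmuPow E hE n hn
    · intro h
      have h1 := h 1 le_rfl
      have h2 := h 2 (by omega)
      rw [mmuPow_one E h0 hsupp] at h1
      rw [mmuPow_two E h0 hsupp] at h2
      exact bwd h1 h2

end Flexion
end
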